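/- Fix δ ∈ (0,1) and assume the uniform convergence assumption holds with constants C1, C2. Let r̂ = 2^ĵ, where ĵ is the least integer j ≥ 0 such that either 2^{j+1} > T or ‖𝔔_T^{2^j} − 𝔔_T^{2^{j+1}}‖_F > 4·S(2^j, δ). Then with probability at least 1 − δ, ‖P_T − 𝔔_T^{r̂}‖_F ≤ 22 · min_{1 ≤ r ≤ T} ( 21·S(r, δ) + max_{0 ≤ t ≤ r−1} ‖P_T − P_{T−t}‖_F ). -/

import Mathlib

open MeasureTheory ProbabilityTheory

/-- The discrepancy `‖P − Q‖_F`. -/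
noncomputable def dF {ι Z : Type*} [MeasurableSpace Z] (F : ι → Z → ℝ)
    (P Q : Measure Z) : ℝ :=
  ⨆ n, |(∫ z, F n z ∂P) - ∫ z, F n z ∂Q|

/-- The average distribution `P_T^r = (1/r)·Σ_{t=T−r+1}^T P_t`. -/
noncomputable def avgMeas {Z : Type*} [MeasurableSpace Z]
    (P : ℕ → Measure Z) (T r : ℕ) : Measure Z :=
  (r : ENNReal)⁻¹ • ∑ t ∈ Finset.Icc (T - r + 1) T, P t

/-- Empirical average `(1/r)·Σ_{t=T−r+1}^T f(Z_t(ω))`. -/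
noncomputable def empAvg {Z Ω : Type*} (Zs : ℕ → Ω → Z) (T r : ℕ)
    (f : Z → ℝ) (ω : Ω) : ℝ :=
  (r : ℝ)⁻¹ * ∑ t ∈ Finset.Icc (T - r + 1) T, f (Zs t ω)

/-- `‖P − 𝔔_T^r(ω)‖_F`. -/
noncomputable def dPE {ι Z Ω : Type*} [MeasurableSpace Z] (F : ι → Z → ℝ)
    (P : Measure Z) (Zs : ℕ → Ω → Z) (T r : ℕ) (ω : Ω) : ℝ :=
  ⨆ n, |(∫ z, F n z ∂P) - empAvg Zs T r (F n) ω|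

/-- `‖𝔔_T^r(ω) − 𝔔_T^s(ω)‖_F`. -/
noncomputable def dEE {ι Z Ω : Type*} (F : ι → Z → ℝ) (Zs : ℕ → Ω → Z)
    (T r s : ℕ) (ω : Ω) : ℝ :=
  ⨆ n, |empAvg Zs T r (F n) ω - empAvg Zs T s (F n) ω|

/-- `S(r, δ)`. -/
noncomputable def Sfun (C1 C2 r δ : ℝ) : ℝ :=
  (C1 + C2 * Real.sqrt (2 * Real.log (Real.pi ^ 2 / (6 * δ)))) / Real.sqrt r
    + C2 * Real.sqrt (2 * Real.log (Real.logb 2 r + 10) / r)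

/-- `max_{0 ≤ t ≤ r−1} ‖P_T − P_{T−t}‖_F`. -/
noncomputable def maxDrift {ι Z : Type*} [MeasurableSpace Z] (F : ι → Z → ℝ)
    (P : ℕ → Measure Z) (T r : ℕ) : ℝ :=
  ⨆ t : Fin r, dF F (P T) (P (T - (t : ℕ)))

/-- The stopping condition of the adaptive algorithm at step `j`:
either the doubled window no longer fits the data, or the empirical
discrepancy between windows `2^j` and `2^{j+1}` exceeds `4·S(2^j, δ)`. -/
def stopCond {ι Z Ω : Type*} (F : ι → Z → ℝ) (Zs : ℕ → Ω → Z)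
    (T : ℕ) (C1 C2 δ : ℝ) (j : ℕ) (ω : Ω) : Prop :=
  2 ^ (j + 1) > T ∨
    dEE F Zs T (2 ^ j) (2 ^ (j + 1)) ω > 4 * Sfun C1 C2 (2 ^ j : ℕ) δ

namespace ADP


/-- `log (x+11) ≤ (9/8) log (x+10)` for naturals. -/
lemma log_step (j : ℕ) : Real.log ((j:ℝ) + 11) ≤ 9/8 * Real.log ((j:ℝ) + 10) := by
  set x : ℝ := (j:ℝ) + 10 with hxdef
  have hx : (10:ℝ) ≤ x := by
    have : (0:ℝ) ≤ (j:ℝ) := Nat.cast_nonneg j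
    linarith
  have hx0 : (0:ℝ) < x := by linarith
  have h8 : ((1 + 1/x) ^ (8:ℕ) : ℝ) ≤ x := by
    have h1 : (1 + 1/x : ℝ) ≤ 11/10 := by
      have : (1/x : ℝ) ≤ 1/10 := by
        apply div_le_div_of_nonneg_left <;> linarith
      linarith
    calc ((1 + 1/x) ^ (8:ℕ) : ℝ) ≤ (11/10) ^ (8:ℕ) := by
          apply pow_le_pow_left₀ (by positivity) h1
      _ ≤ 10 := by norm_num
      _ ≤ x := hx
  have hb0 : (0:ℝ) < 1 + 1/x := by positivity
  have h18 : (1 + 1/x : ℝ) ≤ x ^ ((8:ℝ)⁻¹) := by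
    have := Real.rpow_le_rpow (by positivity) h8 (by norm_num : (0:ℝ) ≤ (8:ℝ)⁻¹)
    rwa [← Real.rpow_natCast (1 + 1/x) 8, ← Real.rpow_mul (le_of_lt hb0),
      (by norm_num : ((8:ℕ):ℝ) * (8:ℝ)⁻¹ = 1), Real.rpow_one] at this
  have hpow : x + 1 ≤ x ^ ((9:ℝ)/8) := by
    have hmul : x * (1 + 1/x) ≤ x * x ^ ((8:ℝ)⁻¹) :=
      mul_le_mul_of_nonneg_left h18 (le_of_lt hx0)
    have hxx : x * (1 + 1/x) = x + 1 := by field_simp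
    have hr : x * x ^ ((8:ℝ)⁻¹) = x ^ ((9:ℝ)/8) := by
      rw [show (9:ℝ)/8 = 1 + (8:ℝ)⁻¹ by norm_num, Real.rpow_add hx0, Real.rpow_one]
    linarith [hxx ▸ hr ▸ hmul]
  have hgoal : Real.log (x + 1) ≤ 9/8 * Real.log x := by
    calc Real.log (x + 1) ≤ Real.log (x ^ ((9:ℝ)/8)) :=
          Real.log_le_log (by positivity) hpow
      _ = 9/8 * Real.log x := by rw [Real.log_rpow hx0]
  have : (j:ℝ) + 11 = x + 1 := by rw [hxdef]; ring
  rw [this]; exact hgoal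


lemma sqrt_add_le {x y : ℝ} (hx : 0 ≤ x) (hy : 0 ≤ y) :
    Real.sqrt (x + y) ≤ Real.sqrt x + Real.sqrt y := by
  have h := Real.sqrt_le_sqrt (show x + y ≤ (Real.sqrt x + Real.sqrt y)^2 by
    nlinarith [Real.sq_sqrt hx, Real.sq_sqrt hy, Real.sqrt_nonneg x, Real.sqrt_nonneg y])
  rwa [Real.sqrt_sq (by positivity)] at h

lemma Sfun_nonneg {C1 C2 : ℝ} (hC1 : 0 ≤ C1) (hC2 : 0 ≤ C2) (r δ : ℝ) :
    0 ≤ Sfun C1 C2 r δ := by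
  unfold Sfun; positivity

lemma log_j10_nonneg (j : ℕ) : (0:ℝ) ≤ Real.log ((j:ℝ) + 10) := by
  apply Real.log_nonneg; have := Nat.cast_nonneg (α := ℝ) j; linarith

/-- `Sfun` at `r = 2^j`, in closed form. -/
lemma Sfun_pow (C1 C2 δ : ℝ) (j : ℕ) :
    Sfun C1 C2 ((2:ℝ)^j) δ =
      (C1 + C2 * Real.sqrt (2 * Real.log (Real.pi ^ 2 / (6 * δ)))
        + C2 * Real.sqrt (2 * Real.log ((j:ℝ) + 10))) / Real.sqrt ((2:ℝ)^j) := by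
  unfold Sfun
  have h1 : Real.logb 2 ((2:ℝ)^j) = (j:ℝ) := by
    rw [Real.logb_pow, Real.logb_self_eq_one (by norm_num), mul_one]
  have hl : (0:ℝ) ≤ 2 * Real.log ((j:ℝ) + 10) := by linarith [log_j10_nonneg j]
  rw [h1, Real.sqrt_div hl ((2:ℝ)^j)]
  ring

lemma Sfun_pow_cast (C1 C2 δ : ℝ) (j : ℕ) :
    Sfun C1 C2 (((2^j : ℕ) : ℝ)) δ = Sfun C1 C2 ((2:ℝ)^j) δ := by
  norm_num

lemma sqrt2_ge : (4:ℝ)/3 ≤ Real.sqrt 2 := by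
  nlinarith [Real.sq_sqrt (show (0:ℝ) ≤ 2 by norm_num), Real.sqrt_nonneg 2]

/-- geometric decay of `Sfun` along powers of two. -/
lemma Sfun_step {C1 C2 : ℝ} (hC1 : 0 ≤ C1) (hC2 : 0 ≤ C2) (δ : ℝ) (j : ℕ) :
    Sfun C1 C2 ((2:ℝ)^(j+1)) δ ≤ 3/4 * Sfun C1 C2 ((2:ℝ)^j) δ := by
  rw [Sfun_pow, Sfun_pow]
  set A : ℝ := C1 + C2 * Real.sqrt (2 * Real.log (Real.pi ^ 2 / (6 * δ))) with hA
  have hA0 : 0 ≤ A := by positivity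
  have hsq : Real.sqrt ((2:ℝ)^(j+1)) = Real.sqrt 2 * Real.sqrt ((2:ℝ)^j) := by
    rw [pow_succ, mul_comm, Real.sqrt_mul (by positivity)]
  have h2 : (0:ℝ) < Real.sqrt 2 := by positivity
  have h2j : (0:ℝ) < Real.sqrt ((2:ℝ)^j) := by positivity
  have hlog10 := log_j10_nonneg j
  have hkey : Real.sqrt (2 * Real.log ((j:ℝ)+1+10)) ≤
      3 * Real.sqrt 2 / 4 * Real.sqrt (2 * Real.log ((j:ℝ) + 10)) := by
    have hls : Real.log ((j:ℝ)+1+10) ≤ 9/8 * Real.log ((j:ℝ)+10) := by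
      rw [show (j:ℝ)+1+10 = (j:ℝ)+11 by ring]; exact log_step j
    have h1 : Real.sqrt (2 * Real.log ((j:ℝ)+1+10)) ≤
        Real.sqrt ((9/8) * (2 * Real.log ((j:ℝ)+10))) :=
      Real.sqrt_le_sqrt (by linarith)
    have h2' : Real.sqrt ((9/8 : ℝ) * (2 * Real.log ((j:ℝ)+10)))
        = Real.sqrt (9/8) * Real.sqrt (2 * Real.log ((j:ℝ)+10)) :=
      Real.sqrt_mul (by norm_num) _
    have h3 : Real.sqrt ((9:ℝ)/8) = 3 * Real.sqrt 2 / 4 := by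
      rw [show (9:ℝ)/8 = (3 * Real.sqrt 2 / 4)^2 by
        have := Real.sq_sqrt (show (0:ℝ) ≤ 2 by norm_num); nlinarith]
      exact Real.sqrt_sq (by positivity)
    rw [h2', h3] at h1; exact h1
  rw [hsq]
  have hnum : A + C2 * Real.sqrt (2 * Real.log ((j:ℝ)+1+10)) ≤
      3 * Real.sqrt 2 / 4 * (A + C2 * Real.sqrt (2 * Real.log ((j:ℝ)+10))) := by
    have hA' : A ≤ 3 * Real.sqrt 2 / 4 * A := by
      have h1 : (1:ℝ) ≤ 3 * Real.sqrt 2 / 4 := by linarith [sqrt2_ge]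
      nlinarith [mul_le_mul_of_nonneg_right h1 hA0]
    have := mul_le_mul_of_nonneg_left hkey hC2
    nlinarith
  push_cast
  calc (A + C2 * Real.sqrt (2 * Real.log ((j:ℝ) + 1 + 10))) / (Real.sqrt 2 * Real.sqrt ((2:ℝ)^j))
      ≤ (3 * Real.sqrt 2 / 4 * (A + C2 * Real.sqrt (2 * Real.log ((j:ℝ)+10)))) / (Real.sqrt 2 * Real.sqrt ((2:ℝ)^j)) := by
        apply div_le_div_of_nonneg_right hnum (by positivity)
    _ = 3/4 * ((A + C2 * Real.sqrt (2 * Real.log ((j:ℝ)+10))) / Real.sqrt ((2:ℝ)^j)) := by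
        have hs2 : Real.sqrt 2 * Real.sqrt 2 = 2 := Real.mul_self_sqrt (by norm_num)
        field_simp


/-- geometric sum bound: if `g (j+1) ≤ 3/4 g j` and `g ≥ 0` then sums over `Ico` are `≤ 4 g a`. -/
lemma sum_Ico_le (g : ℕ → ℝ) (hg0 : ∀ j, 0 ≤ g j) (hgs : ∀ j, g (j+1) ≤ 3/4 * g j) :
    ∀ k a, ∑ j ∈ Finset.Ico a (a + k), g j ≤ 4 * g a := by
  intro k
  induction k with
  | zero => intro a; simp; linarith [hg0 a]
  | succ n ih =>
    intro a
    have hsplit : Finset.Ico a (a + (n+1)) = insert a (Finset.Ico (a+1) ((a+1) + n)) := by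
      rw [show a + (n+1) = (a+1) + n by omega,
        Finset.insert_Ico_add_one_left_eq_Ico (by omega)]
    rw [hsplit, Finset.sum_insert (by simp)]
    have h1 := ih (a+1)
    have h2 := hgs a
    linarith
  
/-- monotonicity along the chain. -/
lemma Sfun_pow_mono {C1 C2 : ℝ} (hC1 : 0 ≤ C1) (hC2 : 0 ≤ C2) (δ : ℝ) {i j : ℕ} (h : i ≤ j) :
    Sfun C1 C2 ((2:ℝ)^j) δ ≤ Sfun C1 C2 ((2:ℝ)^i) δ := by
  induction j with
  | zero => simp_all
  | succ n ih =>
    rcases Nat.lt_or_ge i (n+1) with h' | h'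
    · have := ih (by omega)
      have h2 := Sfun_step hC1 hC2 δ n
      have h3 := Sfun_nonneg hC1 hC2 ((2:ℝ)^n) δ
      linarith
    · have : i = n+1 := by omega
      subst this; rfl

/-- comparison at `j* = Nat.log 2 r`. -/
lemma Sfun_logfloor_le {C1 C2 : ℝ} (hC1 : 0 ≤ C1) (hC2 : 0 ≤ C2) (δ : ℝ) (r : ℕ) (hr : 1 ≤ r) :
    Sfun C1 C2 ((2:ℝ)^(Nat.log 2 r)) δ ≤ 2 * Sfun C1 C2 (r:ℝ) δ := by
  set j := Nat.log 2 r with hj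
  have h1 : 2^j ≤ r := Nat.pow_log_le_self 2 (by omega)
  have h2 : r < 2^(j+1) := Nat.lt_pow_succ_log_self (by norm_num) r
  have hr0 : (0:ℝ) < (r:ℝ) := by exact_mod_cast hr
  have h1' : ((2:ℝ))^j ≤ (r:ℝ) := by exact_mod_cast h1
  have h2' : (r:ℝ) ≤ 2 * (2:ℝ)^j := by
    have : (r:ℝ) < ((2:ℝ))^(j+1) := by exact_mod_cast h2
    rw [pow_succ] at this; linarith
  -- sqrt comparison : √r ≤ 2 √(2^j)
  have hsr : Real.sqrt (r:ℝ) ≤ 2 * Real.sqrt ((2:ℝ)^j) := by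
    have h4 : Real.sqrt (4:ℝ) = 2 := by
      rw [show (4:ℝ) = 2^2 by norm_num, Real.sqrt_sq (by norm_num)]
    rw [show (2:ℝ) * Real.sqrt ((2:ℝ)^j) = Real.sqrt (4 * (2:ℝ)^j) by
      rw [Real.sqrt_mul (by norm_num), h4]]
    exact Real.sqrt_le_sqrt (by linarith)
  have hL : Real.logb 2 (r:ℝ) + 10 ≥ (j:ℝ) + 10 := by
    have : (j:ℝ) ≤ Real.logb 2 (r:ℝ) := by
      have := Real.logb_le_logb_of_le (b := 2) (by norm_num) (by positivity) h1'
      rwa [show ((2:ℝ))^j = ((2:ℝ))^(j:ℕ) from rfl, Real.logb_pow,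
        Real.logb_self_eq_one (by norm_num), mul_one] at this
    linarith
  have hlogb0 : (0:ℝ) ≤ Real.logb 2 (r:ℝ) := Real.logb_nonneg (by norm_num) (by exact_mod_cast hr)
  have hLlog : Real.log ((j:ℝ) + 10) ≤ Real.log (Real.logb 2 (r:ℝ) + 10) :=
    Real.log_le_log (by positivity) hL
  rw [Sfun_pow]
  have hSr : Sfun C1 C2 (r:ℝ) δ =
      (C1 + C2 * Real.sqrt (2 * Real.log (Real.pi ^ 2 / (6 * δ)))
        + C2 * Real.sqrt (2 * Real.log (Real.logb 2 (r:ℝ) + 10))) / Real.sqrt (r:ℝ) := by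
    unfold Sfun
    rw [Real.sqrt_div (by
      have : (0:ℝ) ≤ Real.log (Real.logb 2 (r:ℝ) + 10) := Real.log_nonneg (by linarith)
      linarith) (r:ℝ)]
    ring
  rw [hSr]
  set A := C1 + C2 * Real.sqrt (2 * Real.log (Real.pi ^ 2 / (6 * δ))) with hA
  set Nj := A + C2 * Real.sqrt (2 * Real.log ((j:ℝ) + 10)) with hNj
  set Nr := A + C2 * Real.sqrt (2 * Real.log (Real.logb 2 (r:ℝ) + 10)) with hNr
  have hA0 : 0 ≤ A := by positivity
  have hNjNr : Nj ≤ Nr := by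
    have := Real.sqrt_le_sqrt (show 2 * Real.log ((j:ℝ)+10) ≤ 2 * Real.log (Real.logb 2 (r:ℝ) + 10) by linarith)
    nlinarith [mul_le_mul_of_nonneg_left this hC2]
  have hNr0 : 0 ≤ Nr := by
    have := Real.sqrt_nonneg (2 * Real.log (Real.logb 2 (r:ℝ) + 10)); positivity
  have hsp : (0:ℝ) < Real.sqrt ((2:ℝ)^j) := by positivity
  have hrp : (0:ℝ) < Real.sqrt (r:ℝ) := Real.sqrt_pos.mpr hr0
  calc Nj / Real.sqrt ((2:ℝ)^j) ≤ Nr / Real.sqrt ((2:ℝ)^j) :=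
        by apply div_le_div_of_nonneg_right hNjNr hsp.le
    _ ≤ 2 * (Nr / Real.sqrt (r:ℝ)) := by
        rw [show 2 * (Nr / Real.sqrt (r:ℝ)) = 2 * Nr / Real.sqrt (r:ℝ) by ring]
        rw [div_le_div_iff₀ hsp hrp]
        nlinarith [mul_le_mul_of_nonneg_left hsr hNr0]

noncomputable def deltaj (δ : ℝ) (j : ℕ) : ℝ := 6 * δ / (Real.pi^2 * ((j:ℝ)+10)^2)

lemma deltaj_pos {δ : ℝ} (hδ0 : 0 < δ) (j : ℕ) : 0 < deltaj δ j := by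
  unfold deltaj
  have := Real.pi_pos
  positivity

lemma deltaj_lt_one {δ : ℝ} (hδ0 : 0 < δ) (hδ1 : δ < 1) (j : ℕ) : deltaj δ j < 1 := by
  unfold deltaj
  have hpi := Real.pi_gt_three
  have hj : (0:ℝ) ≤ (j:ℝ) := Nat.cast_nonneg j
  have hp2 : (9:ℝ) ≤ Real.pi^2 := by nlinarith
  have hj2 : (100:ℝ) ≤ ((j:ℝ)+10)^2 := by nlinarith
  rw [div_lt_one (by nlinarith)]
  nlinarith

lemma log_pi_nonneg {δ : ℝ} (hδ0 : 0 < δ) (hδ1 : δ < 1) :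
    0 ≤ Real.log (Real.pi^2 / (6 * δ)) := by
  apply Real.log_nonneg
  have hpi := Real.pi_gt_three
  exact (one_le_div (by linarith)).mpr (by nlinarith)

lemma log_inv_deltaj {δ : ℝ} (hδ0 : 0 < δ) (j : ℕ) :
    Real.log (1 / deltaj δ j) =
      Real.log (Real.pi^2 / (6 * δ)) + 2 * Real.log ((j:ℝ)+10) := by
  unfold deltaj
  have hpi := Real.pi_pos
  have hj : (0:ℝ) ≤ (j:ℝ) := Nat.cast_nonneg j
  rw [show (1:ℝ) / (6 * δ / (Real.pi^2 * ((j:ℝ)+10)^2))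
      = (Real.pi^2 / (6*δ)) * ((j:ℝ)+10)^2 by field_simp]
  rw [Real.log_mul (by positivity) (by positivity), Real.log_pow]
  push_cast; ring

/-- The concentration bound from `hUC` at level `deltaj δ j` is at most `Sfun`. -/
lemma UC_le_Sfun {C1 C2 δ : ℝ} (hC1 : 0 ≤ C1) (hC2 : 0 ≤ C2)
    (hδ0 : 0 < δ) (hδ1 : δ < 1) (j : ℕ) :
    C1 / Real.sqrt (((2^j:ℕ)):ℝ)
      + C2 * Real.sqrt (Real.log (1 / deltaj δ j) / (((2^j:ℕ)):ℝ))
      ≤ Sfun C1 C2 (((2^j:ℕ)):ℝ) δ := by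
  have hcast : (((2^j:ℕ)):ℝ) = (2:ℝ)^j := by norm_num
  rw [hcast, Sfun_pow]
  set a := Real.log (Real.pi^2 / (6 * δ)) with ha
  have ha0 : 0 ≤ a := log_pi_nonneg hδ0 hδ1
  have hl0 : 0 ≤ 2 * Real.log ((j:ℝ)+10) := by linarith [log_j10_nonneg j]
  have hlog : Real.log (1 / deltaj δ j) = a + 2 * Real.log ((j:ℝ)+10) := log_inv_deltaj hδ0 j
  have hsplit : Real.sqrt (Real.log (1 / deltaj δ j) / (2:ℝ)^j)
      = Real.sqrt (a + 2 * Real.log ((j:ℝ)+10)) / Real.sqrt ((2:ℝ)^j) := by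
    rw [hlog, Real.sqrt_div (by linarith) _]
  have hkey : Real.sqrt (a + 2 * Real.log ((j:ℝ)+10))
      ≤ Real.sqrt (2*a) + Real.sqrt (2 * Real.log ((j:ℝ)+10)) := by
    calc Real.sqrt (a + 2 * Real.log ((j:ℝ)+10))
        ≤ Real.sqrt a + Real.sqrt (2 * Real.log ((j:ℝ)+10)) := sqrt_add_le ha0 hl0
      _ ≤ Real.sqrt (2*a) + Real.sqrt (2 * Real.log ((j:ℝ)+10)) := by
          have : Real.sqrt a ≤ Real.sqrt (2*a) := Real.sqrt_le_sqrt (by linarith)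
          linarith
  rw [hsplit]
  have hsp : (0:ℝ) < Real.sqrt ((2:ℝ)^j) := by positivity
  rw [← mul_div_assoc, ← add_div, div_le_div_iff₀ hsp hsp]
  have := mul_le_mul_of_nonneg_left hkey hC2
  nlinarith

/-- sum of the `deltaj` over any range is at most `δ`. -/
lemma sum_deltaj_le {δ : ℝ} (hδ0 : 0 < δ) (m : ℕ) :
    ∑ j ∈ Finset.range m, deltaj δ j ≤ δ := by
  have hpi := Real.pi_gt_three
  have h1 : ∀ j : ℕ, deltaj δ j ≤ δ * (1/((j:ℝ)+9) - 1/((j:ℝ)+10)) := by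
    intro j
    unfold deltaj
    have hj : (0:ℝ) ≤ (j:ℝ) := Nat.cast_nonneg j
    have he : (1:ℝ)/((j:ℝ)+9) - 1/((j:ℝ)+10) = 1/(((j:ℝ)+9)*((j:ℝ)+10)) := by
      field_simp; ring
    have hp2 : (9:ℝ) ≤ Real.pi^2 := by nlinarith
    have hj2 : (100:ℝ) ≤ ((j:ℝ)+10)^2 := by nlinarith
    rw [he, div_le_iff₀ (by nlinarith), mul_comm]
    rw [show δ * (1/(((j:ℝ)+9)*((j:ℝ)+10))) * (Real.pi^2 * ((j:ℝ)+10)^2)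
        = δ * ((Real.pi^2 * ((j:ℝ)+10)^2) / (((j:ℝ)+9)*((j:ℝ)+10))) by ring]
    have : (6:ℝ) ≤ (Real.pi^2 * ((j:ℝ)+10)^2) / (((j:ℝ)+9)*((j:ℝ)+10)) := by
      rw [le_div_iff₀ (by nlinarith)]
      nlinarith
    nlinarith
  calc ∑ j ∈ Finset.range m, deltaj δ j
      ≤ ∑ j ∈ Finset.range m, δ * (1/((j:ℝ)+9) - 1/((j:ℝ)+10)) :=
        Finset.sum_le_sum fun j _ => h1 j
    _ ≤ δ := by
        have htel := Finset.sum_range_sub' (fun i : ℕ => 1/((i:ℝ)+9)) m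
        have heq : ∑ j ∈ Finset.range m, δ * (1/((j:ℝ)+9) - 1/((j:ℝ)+10))
            = δ * ∑ j ∈ Finset.range m,
              ((fun i : ℕ => 1/((i:ℝ)+9)) j - (fun i : ℕ => 1/((i:ℝ)+9)) (j+1)) := by
          rw [Finset.mul_sum]; apply Finset.sum_congr rfl; intro j _
          simp only []; push_cast; ring
        rw [heq, htel]
        have hm : (0:ℝ) < (m:ℝ)+9 := by positivity
        have h2 : (0:ℝ) < 1/((m:ℝ)+9) := by positivity
        have : ((fun i : ℕ => 1/((i:ℝ)+9)) 0 - (fun i : ℕ => 1/((i:ℝ)+9)) m)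
            = 1/9 - 1/((m:ℝ)+9) := by norm_num
        rw [this]
        nlinarith

section Aux

variable {Z Ω : Type*} [MeasurableSpace Z] [MeasurableSpace Ω]

lemma abs_integral_le (Q : Measure Z) [IsProbabilityMeasure Q] {f : Z → ℝ} {B : ℝ}
    (hf : ∀ z, |f z| ≤ B) : |∫ z, f z ∂Q| ≤ B := by
  have := norm_integral_le_of_norm_le_const (μ := Q) (f := f) (C := B)
    (Filter.Eventually.of_forall (fun z => by simpa using hf z))
  simpa using this

lemma abs_empAvg_le (Zs : ℕ → Ω → Z) {T r : ℕ} (hr : 1 ≤ r) (hrT : r ≤ T)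
    {f : Z → ℝ} {B : ℝ} (hf : ∀ z, |f z| ≤ B) (ω : Ω) :
    |empAvg Zs T r f ω| ≤ B := by
  unfold empAvg
  have hcard : (Finset.Icc (T - r + 1) T).card = r := by
    rw [Nat.card_Icc]; omega
  have hsum : |∑ t ∈ Finset.Icc (T - r + 1) T, f (Zs t ω)| ≤ (r:ℝ) * B := by
    calc |∑ t ∈ Finset.Icc (T - r + 1) T, f (Zs t ω)|
        ≤ ∑ t ∈ Finset.Icc (T - r + 1) T, |f (Zs t ω)| := Finset.abs_sum_le_sum_abs _ _
      _ ≤ (Finset.Icc (T - r + 1) T).card • B :=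
          Finset.sum_le_card_nsmul _ _ _ (fun t _ => hf _)
      _ = (r:ℝ) * B := by rw [hcard, nsmul_eq_mul]
  have hr0 : (0:ℝ) < (r:ℝ) := by exact_mod_cast hr
  rw [abs_mul, abs_inv, abs_of_nonneg (le_of_lt hr0)]
  calc (r:ℝ)⁻¹ * |∑ t ∈ Finset.Icc (T - r + 1) T, f (Zs t ω)|
      ≤ (r:ℝ)⁻¹ * ((r:ℝ) * B) := by
        apply mul_le_mul_of_nonneg_left hsum (by positivity)
    _ = B := by field_simp

variable {F : ℕ → Z → ℝ} {B : ℝ}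

lemma bddAbove_dPE (hFbdd : ∀ n z, |F n z| ≤ B) (Q : Measure Z) [IsProbabilityMeasure Q]
    (Zs : ℕ → Ω → Z) {T r : ℕ} (hr : 1 ≤ r) (hrT : r ≤ T) (ω : Ω) :
    BddAbove (Set.range fun n => |(∫ z, F n z ∂Q) - empAvg Zs T r (F n) ω|) := by
  refine ⟨2 * B, ?_⟩
  rintro y ⟨n, rfl⟩
  calc |(∫ z, F n z ∂Q) - empAvg Zs T r (F n) ω|
      ≤ |∫ z, F n z ∂Q| + |empAvg Zs T r (F n) ω| := abs_sub _ _
    _ ≤ B + B := add_le_add (abs_integral_le Q (hFbdd n)) (abs_empAvg_le Zs hr hrT (hFbdd n) ω)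
    _ = 2 * B := by ring

lemma bddAbove_dF (hFbdd : ∀ n z, |F n z| ≤ B) (P Q : Measure Z)
    [IsProbabilityMeasure P] [IsProbabilityMeasure Q] :
    BddAbove (Set.range fun n => |(∫ z, F n z ∂P) - ∫ z, F n z ∂Q|) := by
  refine ⟨2 * B, ?_⟩
  rintro y ⟨n, rfl⟩
  calc |(∫ z, F n z ∂P) - ∫ z, F n z ∂Q| ≤ |∫ z, F n z ∂P| + |∫ z, F n z ∂Q| := abs_sub _ _
    _ ≤ B + B := add_le_add (abs_integral_le P (hFbdd n)) (abs_integral_le Q (hFbdd n))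
    _ = 2 * B := by ring

lemma bddAbove_dEE (hFbdd : ∀ n z, |F n z| ≤ B) (Zs : ℕ → Ω → Z) {T r s : ℕ}
    (hr : 1 ≤ r) (hrT : r ≤ T) (hs : 1 ≤ s) (hsT : s ≤ T) (ω : Ω) :
    BddAbove (Set.range fun n => |empAvg Zs T r (F n) ω - empAvg Zs T s (F n) ω|) := by
  refine ⟨2 * B, ?_⟩
  rintro y ⟨n, rfl⟩
  calc |empAvg Zs T r (F n) ω - empAvg Zs T s (F n) ω|
      ≤ |empAvg Zs T r (F n) ω| + |empAvg Zs T s (F n) ω| := abs_sub _ _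
    _ ≤ B + B := add_le_add (abs_empAvg_le Zs hr hrT (hFbdd n) ω) (abs_empAvg_le Zs hs hsT (hFbdd n) ω)
    _ = 2 * B := by ring

lemma dPE_triangle1 (hFbdd : ∀ n z, |F n z| ≤ B) (P' Q : Measure Z)
    [IsProbabilityMeasure P'] [IsProbabilityMeasure Q] (Zs : ℕ → Ω → Z)
    {T r : ℕ} (hr : 1 ≤ r) (hrT : r ≤ T) (ω : Ω) :
    dPE F P' Zs T r ω ≤ dF F P' Q + dPE F Q Zs T r ω := by
  apply ciSup_le
  intro n
  calc |(∫ z, F n z ∂P') - empAvg Zs T r (F n) ω|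
      ≤ |(∫ z, F n z ∂P') - ∫ z, F n z ∂Q| + |(∫ z, F n z ∂Q) - empAvg Zs T r (F n) ω| :=
        abs_sub_le _ _ _
    _ ≤ dF F P' Q + dPE F Q Zs T r ω :=
        add_le_add (le_ciSup (bddAbove_dF hFbdd P' Q) n)
          (le_ciSup (bddAbove_dPE hFbdd Q Zs hr hrT ω) n)

lemma dPE_triangle2 (hFbdd : ∀ n z, |F n z| ≤ B) (P' : Measure Z)
    [IsProbabilityMeasure P'] (Zs : ℕ → Ω → Z)
    {T r s : ℕ} (hr : 1 ≤ r) (hrT : r ≤ T) (hs : 1 ≤ s) (hsT : s ≤ T) (ω : Ω) :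
    dPE F P' Zs T s ω ≤ dPE F P' Zs T r ω + dEE F Zs T r s ω := by
  apply ciSup_le
  intro n
  calc |(∫ z, F n z ∂P') - empAvg Zs T s (F n) ω|
      ≤ |(∫ z, F n z ∂P') - empAvg Zs T r (F n) ω|
        + |empAvg Zs T r (F n) ω - empAvg Zs T s (F n) ω| := abs_sub_le _ _ _
    _ ≤ dPE F P' Zs T r ω + dEE F Zs T r s ω :=
        add_le_add (le_ciSup (bddAbove_dPE hFbdd P' Zs hr hrT ω) n)
          (le_ciSup (bddAbove_dEE hFbdd Zs hr hrT hs hsT ω) n)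

lemma dEE_triangle (hFbdd : ∀ n z, |F n z| ≤ B) (P' : Measure Z)
    [IsProbabilityMeasure P'] (Zs : ℕ → Ω → Z)
    {T r s : ℕ} (hr : 1 ≤ r) (hrT : r ≤ T) (hs : 1 ≤ s) (hsT : s ≤ T) (ω : Ω) :
    dEE F Zs T r s ω ≤ dPE F P' Zs T r ω + dPE F P' Zs T s ω := by
  apply ciSup_le
  intro n
  calc |empAvg Zs T r (F n) ω - empAvg Zs T s (F n) ω|
      ≤ |empAvg Zs T r (F n) ω - ∫ z, F n z ∂P'| + |(∫ z, F n z ∂P') - empAvg Zs T s (F n) ω| :=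
        abs_sub_le _ _ _
    _ = |(∫ z, F n z ∂P') - empAvg Zs T r (F n) ω| + |(∫ z, F n z ∂P') - empAvg Zs T s (F n) ω| := by
        rw [abs_sub_comm]
    _ ≤ dPE F P' Zs T r ω + dPE F P' Zs T s ω :=
        add_le_add (le_ciSup (bddAbove_dPE hFbdd P' Zs hr hrT ω) n)
          (le_ciSup (bddAbove_dPE hFbdd P' Zs hs hsT ω) n)

lemma integrable_bdd (Q : Measure Z) [IsFiniteMeasure Q] {f : Z → ℝ}
    (hm : Measurable f) (hf : ∀ z, |f z| ≤ B) : Integrable f Q :=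
  ⟨hm.aestronglyMeasurable,
    HasFiniteIntegral.of_bounded (C := B) (Filter.Eventually.of_forall fun z => by simpa using hf z)⟩

lemma integral_avgMeas (P : ℕ → Measure Z) (hP : ∀ t, IsProbabilityMeasure (P t))
    {T r : ℕ} (hr : 1 ≤ r) {f : Z → ℝ} (hm : Measurable f) (hf : ∀ z, |f z| ≤ B) :
    ∫ z, f z ∂(avgMeas P T r) = (r:ℝ)⁻¹ * ∑ t ∈ Finset.Icc (T - r + 1) T, ∫ z, f z ∂(P t) := by
  unfold avgMeas
  rw [integral_smul_measure, integral_finset_sum_measure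
    (fun t _ => by haveI := hP t; exact integrable_bdd (P t) hm hf)]
  simp [ENNReal.toReal_inv]

lemma avg_isProb (P : ℕ → Measure Z) (hP : ∀ t, IsProbabilityMeasure (P t))
    {T r : ℕ} (hr : 1 ≤ r) (hrT : r ≤ T) : IsProbabilityMeasure (avgMeas P T r) := by
  constructor
  unfold avgMeas
  have hcard : (Finset.Icc (T - r + 1) T).card = r := by rw [Nat.card_Icc]; omega
  rw [Measure.smul_apply, Measure.finset_sum_apply]
  have : ∀ t ∈ Finset.Icc (T - r + 1) T, P t Set.univ = 1 := fun t _ => (hP t).measure_univ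
  rw [Finset.sum_congr rfl this, Finset.sum_const, hcard, smul_eq_mul]
  rw [nsmul_eq_mul, mul_one]
  exact ENNReal.inv_mul_cancel (by simp; omega) (by simp)

lemma maxDrift_nonneg (P : ℕ → Measure Z) {T r : ℕ} (hr : 1 ≤ r) :
    0 ≤ maxDrift F P T r := by
  have h0 : dF F (P T) (P (T - ((⟨0, hr⟩ : Fin r) : ℕ))) ≤ maxDrift F P T r :=
    le_ciSup (f := fun u : Fin r => dF F (P T) (P (T - (u : ℕ))))
      (Set.Finite.bddAbove (Set.finite_range _)) (⟨0, hr⟩ : Fin r)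
  have : dF F (P T) (P (T - ((⟨0, hr⟩ : Fin r) : ℕ))) = 0 := by
    simp [dF, ciSup_const]
  linarith [h0, this.symm.le]

lemma maxDrift_mono (P : ℕ → Measure Z) {T r1 r2 : ℕ} (h1 : 1 ≤ r1) (h : r1 ≤ r2) :
    maxDrift F P T r1 ≤ maxDrift F P T r2 := by
  haveI : Nonempty (Fin r1) := ⟨⟨0, h1⟩⟩
  apply ciSup_le
  intro t
  exact le_ciSup (f := fun u : Fin r2 => dF F (P T) (P (T - (u : ℕ))))
    (Set.Finite.bddAbove (Set.finite_range _)) (⟨t.1, lt_of_lt_of_le t.2 h⟩ : Fin r2)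

lemma dF_avg_le_maxDrift (hFmeas : ∀ n, Measurable (F n)) (hFbdd : ∀ n z, |F n z| ≤ B)
    (P : ℕ → Measure Z) (hP : ∀ t, IsProbabilityMeasure (P t))
    {T r : ℕ} (hr : 1 ≤ r) (hrT : r ≤ T) :
    dF F (P T) (avgMeas P T r) ≤ maxDrift F P T r := by
  haveI := fun t => hP t
  apply ciSup_le
  intro n
  rw [integral_avgMeas P hP hr (hFmeas n) (hFbdd n)]
  have hcard : (Finset.Icc (T - r + 1) T).card = r := by rw [Nat.card_Icc]; omega
  have hr0 : (0:ℝ) < (r:ℝ) := by exact_mod_cast hr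
  have hsum : (∫ z, F n z ∂(P T)) - (r:ℝ)⁻¹ * ∑ t ∈ Finset.Icc (T - r + 1) T, ∫ z, F n z ∂(P t)
      = (r:ℝ)⁻¹ * ∑ t ∈ Finset.Icc (T - r + 1) T,
          ((∫ z, F n z ∂(P T)) - ∫ z, F n z ∂(P t)) := by
    rw [Finset.sum_sub_distrib, Finset.sum_const, hcard, nsmul_eq_mul]
    field_simp
  rw [hsum, abs_mul, abs_inv, abs_of_nonneg (le_of_lt hr0)]
  have hterm : ∀ t ∈ Finset.Icc (T - r + 1) T,
      |(∫ z, F n z ∂(P T)) - ∫ z, F n z ∂(P t)| ≤ maxDrift F P T r := by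
    intro t ht
    rw [Finset.mem_Icc] at ht
    have h1 : |(∫ z, F n z ∂(P T)) - ∫ z, F n z ∂(P t)| ≤ dF F (P T) (P t) :=
      le_ciSup (bddAbove_dF hFbdd (P T) (P t)) n
    have h2 : T - (T - t) = t := by omega
    have h3 : T - t < r := by omega
    have h4 : dF F (P T) (P (T - ((⟨T - t, h3⟩ : Fin r) : ℕ))) ≤ maxDrift F P T r :=
      le_ciSup (f := fun u : Fin r => dF F (P T) (P (T - (u : ℕ))))
        (Set.Finite.bddAbove (Set.finite_range _)) (⟨T - t, h3⟩ : Fin r)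
    simp only [h2] at h4
    exact h1.trans h4
  calc (r:ℝ)⁻¹ * |∑ t ∈ Finset.Icc (T - r + 1) T, ((∫ z, F n z ∂(P T)) - ∫ z, F n z ∂(P t))|
      ≤ (r:ℝ)⁻¹ * ∑ t ∈ Finset.Icc (T - r + 1) T, |(∫ z, F n z ∂(P T)) - ∫ z, F n z ∂(P t)| := by
        apply mul_le_mul_of_nonneg_left (Finset.abs_sum_le_sum_abs _ _) (by positivity)
    _ ≤ (r:ℝ)⁻¹ * ((Finset.Icc (T - r + 1) T).card • maxDrift F P T r) := by
        apply mul_le_mul_of_nonneg_left (Finset.sum_le_card_nsmul _ _ _ hterm) (by positivity)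
    _ = maxDrift F P T r := by
        rw [hcard, nsmul_eq_mul]; field_simp

lemma measurableSet_dPE_le (hFmeas : ∀ n, Measurable (F n)) (hFbdd : ∀ n z, |F n z| ≤ B)
    (Q : Measure Z) [IsProbabilityMeasure Q] (Zs : ℕ → Ω → Z) (hZmeas : ∀ t, Measurable (Zs t))
    {T r : ℕ} (hr : 1 ≤ r) (hrT : r ≤ T) (c : ℝ) :
    MeasurableSet {ω : Ω | dPE F Q Zs T r ω ≤ c} := by
  have heq : {ω : Ω | dPE F Q Zs T r ω ≤ c}
      = ⋂ n, {ω : Ω | |(∫ z, F n z ∂Q) - empAvg Zs T r (F n) ω| ≤ c} := by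
    ext ω
    simp only [Set.mem_setOf_eq, Set.mem_iInter]
    constructor
    · intro h n; exact le_trans (le_ciSup (bddAbove_dPE hFbdd Q Zs hr hrT ω) n) h
    · intro h; exact ciSup_le h
  rw [heq]
  refine MeasurableSet.iInter fun n => measurableSet_le ?_ measurable_const
  apply Measurable.abs
  apply Measurable.sub measurable_const
  unfold empAvg
  exact (Finset.measurable_sum _ (fun t _ => (hFmeas n).comp (hZmeas t))).const_mul _


end Aux

end ADP

/-- main adaptive guarantee. If `ĵ(ω)` is the least `j` at which the
algorithm stops and `r̂ = 2^ĵ`, then with probability at least `1 − δ`,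
`‖P_T − 𝔔_T^{r̂}‖_F ≤ 22·min_{1 ≤ r ≤ T}(21·S(r,δ) + max_{0 ≤ t ≤ r−1}‖P_T − P_{T−t}‖_F)`. -/
theorem stmt6 {Z Ω : Type*} [mZ : MeasurableSpace Z] [MeasurableSpace Ω]
    (μ : Measure Ω) [IsProbabilityMeasure μ]
    (F : ℕ → Z → ℝ) (hFmeas : ∀ n, Measurable (F n))
    (B : ℝ) (hFbdd : ∀ n z, |F n z| ≤ B)
    (T : ℕ) (hT : 1 ≤ T) (P : ℕ → Measure Z)
    (hP : ∀ t, IsProbabilityMeasure (P t))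
    (Zs : ℕ → Ω → Z) (hZmeas : ∀ t, Measurable (Zs t))
    (hindep : iIndepFun Zs μ)
    (hdist : ∀ t ∈ Finset.Icc 1 T, μ.map (Zs t) = P t)
    (C1 C2 : ℝ) (hC1 : 0 ≤ C1) (hC2 : 0 ≤ C2)
    (hUC : ∀ r : ℕ, 1 ≤ r → r ≤ T → ∀ δ' : ℝ, 0 < δ' → δ' < 1 →
      ENNReal.ofReal (1 - δ') ≤ μ {ω | dPE F (avgMeas P T r) Zs T r ω ≤
        C1 / Real.sqrt r + C2 * Real.sqrt (Real.log (1 / δ') / r)})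
    (δ : ℝ) (hδ0 : 0 < δ) (hδ1 : δ < 1)
    (jhat : Ω → ℕ)
    (hjhat : ∀ ω, stopCond F Zs T C1 C2 δ (jhat ω) ω ∧
      ∀ j < jhat ω, ¬ stopCond F Zs T C1 C2 δ j ω) :
    ENNReal.ofReal (1 - δ) ≤
      μ {ω | dPE F (P T) Zs T (2 ^ jhat ω) ω ≤
        22 * (Finset.Icc 1 T).inf' (Finset.nonempty_Icc.mpr hT)
          (fun r => 21 * Sfun C1 C2 (r : ℕ) δ + maxDrift F P T r)} := by

  classical
  -- basic facts
  have hZne : Nonempty Z := by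
    by_contra h
    rw [not_nonempty_iff] at h
    have h1 := (hP 0).measure_univ
    rw [Set.univ_eq_empty_iff.mpr h, measure_empty] at h1
    exact zero_ne_one h1
  have hB : 0 ≤ B := le_trans (abs_nonneg _) (hFbdd 0 (Classical.arbitrary Z))
  haveI := hP
  haveI hPT : IsProbabilityMeasure (P T) := hP T
  set L := Nat.log 2 T with hL
  set E : ℕ → Set Ω := fun j =>
    {ω | dPE F (avgMeas P T (2^j)) Zs T (2^j) ω ≤ Sfun C1 C2 ((2^j : ℕ) : ℝ) δ} with hE
  have hone : ∀ j : ℕ, 1 ≤ 2^j := fun j => Nat.one_le_two_pow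
  have hEmeas : ∀ j, 2^j ≤ T → MeasurableSet (E j) := by
    intro j hj
    haveI := ADP.avg_isProb P hP (hone j) hj
    exact ADP.measurableSet_dPE_le hFmeas hFbdd _ Zs hZmeas (hone j) hj _
  have hEprob : ∀ j, 2^j ≤ T → ENNReal.ofReal (1 - ADP.deltaj δ j) ≤ μ (E j) := by
    intro j hj
    have h := hUC (2^j) (hone j) hj (ADP.deltaj δ j) (ADP.deltaj_pos hδ0 j)
      (ADP.deltaj_lt_one hδ0 hδ1 j)
    refine le_trans h (measure_mono ?_)
    intro ω hω
    exact le_trans hω (ADP.UC_le_Sfun hC1 hC2 hδ0 hδ1 j)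
  have hEcompl : ∀ j, 2^j ≤ T → μ ((E j)ᶜ) ≤ ENNReal.ofReal (ADP.deltaj δ j) := by
    intro j hj
    have h1 : μ (E j) + μ ((E j)ᶜ) = 1 := (measure_add_measure_compl (hEmeas j hj)).trans (measure_univ)
    have h2 : (1:ENNReal) = ENNReal.ofReal (ADP.deltaj δ j) + ENNReal.ofReal (1 - ADP.deltaj δ j) := by
      rw [← ENNReal.ofReal_add (le_of_lt (ADP.deltaj_pos hδ0 j)) (by
        linarith [ADP.deltaj_lt_one hδ0 hδ1 j])]
      norm_num
    refine (ENNReal.add_le_add_iff_right (a := ENNReal.ofReal (1 - ADP.deltaj δ j))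
      ENNReal.ofReal_ne_top).mp ?_
    calc μ ((E j)ᶜ) + ENNReal.ofReal (1 - ADP.deltaj δ j)
        ≤ μ ((E j)ᶜ) + μ (E j) := add_le_add_right (hEprob j hj) _
      _ = 1 := by rw [add_comm]; exact h1
      _ = ENNReal.ofReal (ADP.deltaj δ j) + ENNReal.ofReal (1 - ADP.deltaj δ j) := h2
  set G := ⋂ j ∈ Finset.range (L+1), E j with hG
  have hrangeT : ∀ j ∈ Finset.range (L+1), 2^j ≤ T := by
    intro j hj
    rw [Finset.mem_range] at hj
    exact (Nat.le_log_iff_pow_le (by norm_num) (by omega)).mp (by omega)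
  have hGmeas : MeasurableSet G := by
    rw [hG]
    exact MeasurableSet.biInter (Set.to_countable _) fun j hj => hEmeas j (hrangeT j hj)
  have hGc : μ Gᶜ ≤ ENNReal.ofReal δ := by
    rw [hG, Set.compl_iInter₂]
    calc μ (⋃ j ∈ Finset.range (L+1), (E j)ᶜ)
        ≤ ∑ j ∈ Finset.range (L+1), μ ((E j)ᶜ) := measure_biUnion_finset_le _ _
      _ ≤ ∑ j ∈ Finset.range (L+1), ENNReal.ofReal (ADP.deltaj δ j) :=
          Finset.sum_le_sum fun j hj => hEcompl j (hrangeT j hj)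
      _ = ENNReal.ofReal (∑ j ∈ Finset.range (L+1), ADP.deltaj δ j) :=
          (ENNReal.ofReal_sum_of_nonneg fun j _ => (ADP.deltaj_pos hδ0 j).le).symm
      _ ≤ ENNReal.ofReal δ := ENNReal.ofReal_le_ofReal (ADP.sum_deltaj_le hδ0 _)
  have hGge : ENNReal.ofReal (1 - δ) ≤ μ G := by
    have h1 : μ G + μ Gᶜ = 1 := (measure_add_measure_compl hGmeas).trans (measure_univ)
    refine (ENNReal.add_le_add_iff_right (measure_ne_top μ Gᶜ)).mp ?_
    rw [h1]
    calc ENNReal.ofReal (1-δ) + μ Gᶜ ≤ ENNReal.ofReal (1-δ) + ENNReal.ofReal δ :=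
          add_le_add_right hGc _
      _ = ENNReal.ofReal 1 := by rw [← ENNReal.ofReal_add (by linarith) hδ0.le]; norm_num
      _ = 1 := by simp
  refine le_trans hGge (measure_mono ?_)
  intro ω hω
  simp only [Set.mem_setOf_eq]
  have hωE : ∀ j, 2^j ≤ T →
      dPE F (avgMeas P T (2^j)) Zs T (2^j) ω ≤ Sfun C1 C2 ((2^j : ℕ) : ℝ) δ := by
    intro j hj
    have hjL : j ∈ Finset.range (L+1) := by
      rw [Finset.mem_range]
      have := (Nat.le_log_iff_pow_le (by norm_num) (by omega : T ≠ 0)).mpr hj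
      omega
    exact Set.mem_iInter₂.mp hω j hjL
  obtain ⟨r, hrmem, hinf⟩ := Finset.exists_mem_eq_inf' (Finset.nonempty_Icc.mpr hT)
    (fun r => 21 * Sfun C1 C2 (r : ℕ) δ + maxDrift F P T r)
  rw [hinf]
  rw [Finset.mem_Icc] at hrmem
  obtain ⟨hr1, hrT⟩ := hrmem
  set S := Sfun C1 C2 ((r:ℕ):ℝ) δ with hS
  have hS0 : 0 ≤ S := ADP.Sfun_nonneg hC1 hC2 _ _
  set D := maxDrift F P T r with hD
  have hD0 : 0 ≤ D := ADP.maxDrift_nonneg P hr1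
  set j₀ := Nat.log 2 r with hj₀
  have hj₀r : 2^j₀ ≤ r := Nat.pow_log_le_self 2 (by omega)
  have hrj₀ : r < 2^(j₀+1) := Nat.lt_pow_succ_log_self (by norm_num) r
  have gdef : ∀ j:ℕ, Sfun C1 C2 ((2^j:ℕ):ℝ) δ = Sfun C1 C2 ((2:ℝ)^j) δ :=
    ADP.Sfun_pow_cast C1 C2 δ
  set g : ℕ → ℝ := fun j => Sfun C1 C2 ((2:ℝ)^j) δ with hgdef
  have hg0 : ∀ j, 0 ≤ g j := fun j => ADP.Sfun_nonneg hC1 hC2 _ _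
  have hgs : ∀ j, g (j+1) ≤ 3/4 * g j := fun j => ADP.Sfun_step hC1 hC2 δ j
  have hgj₀ : g j₀ ≤ 2 * S := ADP.Sfun_logfloor_le hC1 hC2 δ r hr1
  have hkey : ∀ j, 2^j ≤ T → dPE F (P T) Zs T (2^j) ω ≤ g j + maxDrift F P T (2^j) := by
    intro j hj
    haveI := ADP.avg_isProb P hP (hone j) hj
    calc dPE F (P T) Zs T (2^j) ω
        ≤ dF F (P T) (avgMeas P T (2^j)) + dPE F (avgMeas P T (2^j)) Zs T (2^j) ω :=
          ADP.dPE_triangle1 hFbdd _ _ Zs (hone j) hj ω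
      _ ≤ maxDrift F P T (2^j) + g j := by
          refine add_le_add (ADP.dF_avg_le_maxDrift hFmeas hFbdd P hP (hone j) hj) ?_
          exact le_of_le_of_eq (hωE j hj) (gdef j)
      _ = g j + maxDrift F P T (2^j) := by ring
  obtain ⟨hstop, hmin⟩ := hjhat ω
  set jh := jhat ω with hjh
  have hfinal : dPE F (P T) Zs T (2^jh) ω ≤ 34 * S + 2 * D := by
    rcases lt_trichotomy jh j₀ with hlt | heq | hgt
    · -- early stop
      have h1 : 2^(jh+1) ≤ T :=
        le_trans (Nat.pow_le_pow_right (by norm_num) (by omega)) (le_trans hj₀r hrT)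
      have h2 : 2^jh ≤ T := le_trans (Nat.pow_le_pow_right (by norm_num) (by omega)) h1
      have hd : dEE F Zs T (2^jh) (2^(jh+1)) ω > 4 * Sfun C1 C2 ((2^jh:ℕ):ℝ) δ := by
        rcases hstop with h | h
        · omega
        · exact h
      rw [gdef jh] at hd
      have h3 := ADP.dEE_triangle hFbdd (P T) Zs (r := 2^jh) (s := 2^(jh+1))
        (hone jh) h2 (hone (jh+1)) h1 ω
      have h4 := hkey jh h2
      have h5 := hkey (jh+1) h1
      have hd1 : maxDrift F P T (2^jh) ≤ D := by
        rw [hD]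
        exact ADP.maxDrift_mono P (hone jh)
          (le_trans (Nat.pow_le_pow_right (by norm_num) (by omega)) hj₀r)
      have hd2 : maxDrift F P T (2^(jh+1)) ≤ D := by
        rw [hD]
        exact ADP.maxDrift_mono P (hone (jh+1))
          (le_trans (Nat.pow_le_pow_right (by norm_num) (by omega)) hj₀r)
      have hg1 : g (jh+1) ≤ g jh := by
        have := hgs jh; have := hg0 jh; linarith
      have h6 : g jh ≤ D := by
        have hgg : g jh = Sfun C1 C2 ((2:ℝ)^jh) δ := rfl
        rw [← hgg] at hd
        linarith
      calc dPE F (P T) Zs T (2^jh) ω ≤ g jh + maxDrift F P T (2^jh) := h4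
        _ ≤ D + D := add_le_add h6 hd1
        _ ≤ 34 * S + 2 * D := by linarith
    · -- jh = j₀
      rw [heq]
      have h2 : 2^j₀ ≤ T := le_trans hj₀r hrT
      have hd1 : maxDrift F P T (2^j₀) ≤ D := by
        rw [hD]; exact ADP.maxDrift_mono P (hone j₀) hj₀r
      calc dPE F (P T) Zs T (2^j₀) ω ≤ g j₀ + maxDrift F P T (2^j₀) := hkey j₀ h2
        _ ≤ 2 * S + D := add_le_add hgj₀ hd1
        _ ≤ 34 * S + 2 * D := by linarith
    · -- telescoping
      have hstep : ∀ k, j₀ + k ≤ jh →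
          dPE F (P T) Zs T (2^(j₀+k)) ω ≤ dPE F (P T) Zs T (2^j₀) ω
            + ∑ j ∈ Finset.Ico j₀ (j₀+k), 4 * g j := by
        intro k
        induction k with
        | zero => intro _; simp
        | succ n ih =>
          intro hkk
          have hn : j₀ + n < jh := by omega
          have hns := hmin (j₀+n) hn
          rw [stopCond] at hns
          push_neg at hns
          obtain ⟨hT2, hdee⟩ := hns
          have hT1 : 2^(j₀+n) ≤ T :=
            le_trans (Nat.pow_le_pow_right (by norm_num) (by omega)) hT2
          have htri := ADP.dPE_triangle2 hFbdd (P T) Zs (r := 2^(j₀+n)) (s := 2^(j₀+n+1))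
            (hone (j₀+n)) hT1 (hone (j₀+n+1)) hT2 ω
          rw [gdef (j₀+n)] at hdee
          have hih := ih (by omega)
          rw [show j₀ + (n+1) = (j₀+n)+1 by omega, Finset.sum_Ico_succ_top (by omega)]
          calc dPE F (P T) Zs T (2^((j₀+n)+1)) ω
              ≤ dPE F (P T) Zs T (2^(j₀+n)) ω + dEE F Zs T (2^(j₀+n)) (2^((j₀+n)+1)) ω := htri
            _ ≤ (dPE F (P T) Zs T (2^j₀) ω + ∑ j ∈ Finset.Ico j₀ (j₀+n), 4 * g j)
                + 4 * g (j₀+n) := add_le_add hih hdee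
            _ = dPE F (P T) Zs T (2^j₀) ω
                + ((∑ j ∈ Finset.Ico j₀ (j₀+n), 4 * g j) + 4 * g (j₀+n)) := by ring
      have hfin := hstep (jh - j₀) (by omega)
      rw [show j₀ + (jh - j₀) = jh by omega] at hfin
      have hsum4 : ∑ j ∈ Finset.Ico j₀ (j₀ + (jh - j₀)), 4 * g j ≤ 16 * g j₀ := by
        rw [← Finset.mul_sum]
        have := ADP.sum_Ico_le g hg0 hgs (jh - j₀) j₀
        linarith
      rw [show j₀ + (jh - j₀) = jh by omega] at hsum4
      have h2 : 2^j₀ ≤ T := le_trans hj₀r hrT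
      have hbase := hkey j₀ h2
      have hd1 : maxDrift F P T (2^j₀) ≤ D := by
        rw [hD]; exact ADP.maxDrift_mono P (hone j₀) hj₀r
      calc dPE F (P T) Zs T (2^jh) ω
          ≤ dPE F (P T) Zs T (2^j₀) ω + ∑ j ∈ Finset.Ico j₀ jh, 4 * g j := hfin
        _ ≤ (g j₀ + maxDrift F P T (2^j₀)) + 16 * g j₀ := add_le_add hbase hsum4
        _ ≤ (2*S + D) + 16 * (2*S) := by
            have : 16 * g j₀ ≤ 16 * (2*S) := by linarith
            linarith
        _ ≤ 34 * S + 2 * D := by linarith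
  calc dPE F (P T) Zs T (2^jh) ω ≤ 34 * S + 2 * D := hfinal
    _ ≤ 22 * (21 * S + D) := by nlinarith
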